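/- arXiv:2104.05385 — 2 statements merged into one kernel-verified Lean document; each statement's English description precedes it below -/
import Mathlib

section
/- Let p : (ℂ,0) → ℂ^{n+1} be a holomorphic curve germ with p(0) = x, let f : ℂ^{n+1} → ℂ be holomorphic with f(x) = 0, and let ℓ(v) = ⟨v, a⟩ be a linear form with ‖a‖ = 1 and ℓ(p(t)) not identically zero. Assume that along p(t) the differential df_{p(t)} is a scalar multiple of ℓ (i.e., p is a parametrization of a branch of the relative polar curve of f with respect to ℓ), and that all partial derivatives of f vanish at x (f ∈ 𝔪²). Then lim_{t→0} f(p(t))/ℓ(p(t)) = 0. -/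
open Filter Topology Metric

set_option maxHeartbeats 1000000 in
/-- Let `p : (ℂ,0) → ℂ^{n+1}` be a holomorphic curve germ with `p 0 = x`,
`f : ℂ^{n+1} → ℂ` holomorphic with `f x = 0`, and `ℓ v = ⟪a, v⟫` a linear form with `‖a‖ = 1`
and `ℓ ∘ p` not identically zero near `0`. If along `p t` the differential `df_{p t}` is a
scalar multiple of `ℓ` (parametrization of a branch of the relative polar curve), and
`df_x = 0` (i.e. `f ∈ 𝔪²`), then `f (p t) / ℓ (p t) → 0` as `t → 0`. -/
theorem cerf_diagram_tangent
    (n : ℕ) (p : ℂ → EuclideanSpace ℂ (Fin (n + 1)))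
    (f : EuclideanSpace ℂ (Fin (n + 1)) → ℂ)
    (a : EuclideanSpace ℂ (Fin (n + 1)))
    (x : EuclideanSpace ℂ (Fin (n + 1)))
    (hp : Differentiable ℂ p) (hp0 : p 0 = x)
    (hf : Differentiable ℂ f) (hfx : f x = 0)
    (ha : ‖a‖ = 1)
    (hℓp : ∀ᶠ t in 𝓝[≠] (0 : ℂ), (inner ℂ a (p t) : ℂ) ≠ 0)
    (hcolin : ∀ t : ℂ, ∃ lam : ℂ,
      ∀ v : EuclideanSpace ℂ (Fin (n + 1)), fderiv ℂ f (p t) v = lam * (inner ℂ a v : ℂ))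
    (hm2 : fderiv ℂ f x = 0) :
    Tendsto (fun t : ℂ => f (p t) / (inner ℂ a (p t) : ℂ)) (𝓝[≠] (0 : ℂ)) (𝓝 0) := by
  classical
  set g : ℂ → ℂ := fun t => f (p t) with hg_def
  set h : ℂ → ℂ := fun t => (inner ℂ a (p t) : ℂ) with hh_def
  have hgoal : (fun t : ℂ => f (p t) / (inner ℂ a (p t) : ℂ)) = fun t => g t / h t := rfl
  rw [hgoal]
  have hg0 : g 0 = 0 := by simp [hg_def, hp0, hfx]
  have haa : (inner ℂ a a : ℂ) = 1 := by
    rw [inner_self_eq_norm_sq_to_K, ha]; norm_num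
  have hdp : ∀ t, HasDerivAt p (deriv p t) t := fun t => (hp t).hasDerivAt
  have hgd : ∀ t, HasDerivAt g (fderiv ℂ f (p t) (deriv p t)) t := fun t =>
    ((hf (p t)).hasFDerivAt).comp_hasDerivAt t (hdp t)
  have hhd : ∀ t, HasDerivAt h ((inner ℂ a (deriv p t) : ℂ)) t := fun t =>
    ((innerSL ℂ a).hasFDerivAt).comp_hasDerivAt t (hdp t)
  have hdg : Differentiable ℂ g := fun t => (hgd t).differentiableAt
  have hdh : Differentiable ℂ h := fun t => (hhd t).differentiableAt
  set L : ℂ → ℂ := fun t => fderiv ℂ f (p t) a with hL_def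
  have hgLh : ∀ t, deriv g t = L t * deriv h t := by
    intro t
    obtain ⟨lam, hlam⟩ := hcolin t
    have h1 : L t = lam := by simpa [haa, ha] using hlam a
    rw [(hgd t).deriv, (hhd t).deriv, hlam (deriv p t), h1]
  -- continuity of L at 0, with value 0
  have hL0 : Tendsto L (𝓝 0) (𝓝 0) := by
    rw [NormedAddCommGroup.tendsto_nhds_zero]
    intro ε hε
    have hK : IsCompact (closedBall x 3) := isCompact_closedBall x 3
    have huc : UniformContinuousOn f (closedBall x 3) :=
      hK.uniformContinuousOn_of_continuous hf.continuous.continuousOn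
    rw [Metric.uniformContinuousOn_iff] at huc
    obtain ⟨δ, hδ, hδ'⟩ := huc (ε / 2) (by positivity)
    have hpt : ∀ᶠ t in 𝓝 (0 : ℂ), dist (p t) x < min δ 1 := by
      have h1 : Tendsto p (𝓝 0) (𝓝 x) := by
        have := hp.continuous.tendsto 0
        rwa [hp0] at this
      exact h1 (Metric.ball_mem_nhds x (lt_min hδ one_pos))
    have hline : ∀ y : EuclideanSpace ℂ (Fin (n + 1)),
        HasDerivAt (fun s : ℂ => f (y + s • a)) (fderiv ℂ f y a) 0 := by
      intro y
      have h1 : HasDerivAt (fun s : ℂ => y + s • a) a 0 := by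
        simpa using ((hasDerivAt_id (0 : ℂ)).smul_const a).const_add y
      have h2 := ((hf (y + (0 : ℂ) • a)).hasFDerivAt).comp_hasDerivAt 0 h1
      simpa [Function.comp_def] using h2
    filter_upwards [hpt] with t ht
    have hsub : HasDerivAt (fun s : ℂ => f (p t + s • a) - f (x + s • a)) (L t) 0 := by
      have h1 := (hline (p t)).sub (hline x)
      rw [hm2] at h1
      simp only [ContinuousLinearMap.zero_apply, sub_zero] at h1
      exact h1
    have hdiff : Differentiable ℂ (fun s : ℂ => f (p t + s • a) - f (x + s • a)) := by
      apply Differentiable.sub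
      · exact hf.comp ((differentiable_const _).add (differentiable_id.smul_const a))
      · exact hf.comp ((differentiable_const _).add (differentiable_id.smul_const a))
    have hbound : ∀ z ∈ sphere (0 : ℂ) 1, ‖f (p t + z • a) - f (x + z • a)‖ ≤ ε / 2 := by
      intro z hz
      have hz1 : ‖z‖ = 1 := by simpa using hz
      have hza : ‖z • a‖ = 1 := by rw [norm_smul, hz1, ha, mul_one]
      have hptx : ‖p t - x‖ < min δ 1 := by rwa [← dist_eq_norm]
      have hm1 : p t + z • a ∈ closedBall x 3 := by
        rw [mem_closedBall, dist_eq_norm]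
        have he : p t + z • a - x = (p t - x) + z • a := by abel
        rw [he]
        calc ‖(p t - x) + z • a‖ ≤ ‖p t - x‖ + ‖z • a‖ := norm_add_le _ _
          _ ≤ 1 + 1 := by
              have := hptx.le.trans (min_le_right δ 1)
              rw [hza]; linarith
          _ ≤ 3 := by norm_num
      have hm2' : x + z • a ∈ closedBall x 3 := by
        rw [mem_closedBall, dist_eq_norm]
        have he : x + z • a - x = z • a := by abel
        rw [he, hza]; norm_num
      have hdist : dist (p t + z • a) (x + z • a) < δ := by
        rw [dist_eq_norm]
        have he : p t + z • a - (x + z • a) = p t - x := by abel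
        rw [he]
        exact hptx.trans_le (min_le_left δ 1)
      have := hδ' _ hm1 _ hm2' hdist
      rw [dist_eq_norm] at this
      exact this.le
    have hcau := Complex.norm_deriv_le_of_forall_mem_sphere_norm_le one_pos
      hdiff.diffContOnCl hbound
    rw [hsub.deriv] at hcau
    calc ‖L t‖ ≤ ε / 2 / 1 := hcau
      _ < ε := by linarith
  by_cases hh0 : h 0 = 0
  swap
  · -- easy case: denominator nonzero at 0
    have hc : Tendsto (fun t => g t / h t) (𝓝 0) (𝓝 (g 0 / h 0)) :=
      (hdg.continuous.continuousAt.div hdh.continuous.continuousAt hh0).tendsto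
    rw [hg0, zero_div] at hc
    exact hc.mono_left nhdsWithin_le_nhds
  -- main case
  have hAh : AnalyticAt ℂ h 0 := hdh.analyticAt 0
  have hnot : ¬ ∀ᶠ z in 𝓝 (0 : ℂ), h z = 0 := by
    intro hzero
    have h1 : ∀ᶠ z in 𝓝[≠] (0 : ℂ), h z = 0 := hzero.filter_mono nhdsWithin_le_nhds
    obtain ⟨z, hz1, hz2⟩ := (h1.and hℓp).exists
    exact hz2 hz1
  have hord : analyticOrderAt h 0 ≠ ⊤ := fun htop => hnot (analyticOrderAt_eq_top.mp htop)
  lift analyticOrderAt h 0 to ℕ using hord with m hm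
  obtain ⟨u, hu, hu0, hueq⟩ := (hAh.analyticOrderAt_eq_natCast).mp hm.symm
  simp only [sub_zero, smul_eq_mul] at hueq
  have hmpos : m ≠ 0 := by
    intro hm0
    have h1 := hueq.self_of_nhds
    rw [hm0, pow_zero, one_mul, hh0] at h1
    exact hu0 h1.symm
  obtain ⟨k, rfl⟩ : ∃ k, m = k + 1 := ⟨m - 1, by omega⟩
  -- u is analytic near 0, so deriv u is continuous at 0
  obtain ⟨r, hr, hran⟩ := Metric.eventually_nhds_iff_ball.mp hu.eventually_analyticAt
  have huan : AnalyticOnNhd ℂ u (ball (0 : ℂ) r) := fun y hy => hran y hy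
  have hdu : AnalyticAt ℂ (deriv u) 0 := huan.deriv 0 (mem_ball_self hr)
  set w : ℂ → ℂ := fun z => (k + 1 : ℂ) * u z + z * deriv u z with hw_def
  have hwc : ContinuousAt w 0 := by
    apply ContinuousAt.add
    · exact continuousAt_const.mul hu.continuousAt
    · exact continuousAt_id.mul hdu.continuousAt
  set C : ℝ := ‖w 0‖ + 1 with hC_def
  have hCpos : 0 < C := by positivity
  have hwC : ∀ᶠ z in 𝓝 (0 : ℂ), ‖w z‖ ≤ C :=
    hwc.norm.eventually_le_const (lt_add_one _)
  have hulow : ∀ᶠ z in 𝓝 (0 : ℂ), ‖u 0‖ / 2 ≤ ‖u z‖ :=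
    hu.continuousAt.norm.eventually_const_le (by
      have : 0 < ‖u 0‖ := norm_pos_iff.mpr hu0
      linarith)
  -- derivative of h factorization
  have hdiffu : ∀ᶠ z in 𝓝 (0 : ℂ), DifferentiableAt ℂ u z :=
    hu.eventually_analyticAt.mono fun z hz => hz.differentiableAt
  have hderivh : ∀ᶠ z in 𝓝 (0 : ℂ), deriv h z = z ^ k * w z := by
    have hev : ∀ᶠ z in 𝓝 (0 : ℂ), h =ᶠ[𝓝 z] fun y => y ^ (k + 1) * u y :=
      hueq.eventually_nhds
    filter_upwards [hev, hdiffu] with z hz hzu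
    rw [Filter.EventuallyEq.deriv_eq hz]
    have h1 : HasDerivAt (fun y : ℂ => y ^ (k + 1) * u y)
        ((k + 1 : ℂ) * z ^ k * u z + z ^ (k + 1) * deriv u z) z := by
      have := (hasDerivAt_pow (k + 1) z).mul hzu.hasDerivAt
      simpa [Pi.mul_def] using this
    rw [h1.deriv, hw_def]
    have hzk : z ^ (k + 1) = z ^ k * z := pow_succ z k
    rw [hzk]; ring
  have hupos : 0 < ‖u 0‖ := norm_pos_iff.mpr hu0
  -- final estimate
  rw [NormedAddCommGroup.tendsto_nhds_zero]
  intro ε hε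
  set ε' : ℝ := ε * ‖u 0‖ / (8 * C) with hε'_def
  have hε'pos : 0 < ε' := by positivity
  have hLsmall : ∀ᶠ z in 𝓝 (0 : ℂ), ‖L z‖ ≤ ε' :=
    hL0.norm.eventually_le_const (by simpa using hε'pos)
  have E2 : ∀ᶠ z in 𝓝 (0 : ℂ), ‖deriv g z‖ ≤ ε' * C * ‖z‖ ^ k := by
    filter_upwards [hLsmall, hderivh, hwC] with z h1 h2 h3
    rw [hgLh z, h2]
    calc ‖L z * (z ^ k * w z)‖ = ‖L z‖ * (‖z‖ ^ k * ‖w z‖) := by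
          rw [norm_mul, norm_mul, norm_pow]
      _ ≤ ε' * (‖z‖ ^ k * C) := by
          apply mul_le_mul h1 _ (by positivity) hε'pos.le
          exact mul_le_mul_of_nonneg_left h3 (by positivity)
      _ = ε' * C * ‖z‖ ^ k := by ring
  obtain ⟨δ, hδpos, hδ⟩ := Metric.eventually_nhds_iff_ball.mp ((hueq.and E2).and hulow)
  rw [eventually_nhdsWithin_iff]
  have hball : ∀ᶠ t in 𝓝 (0 : ℂ), t ∈ ball (0 : ℂ) δ := ball_mem_nhds 0 hδpos
  filter_upwards [hball] with t htb htne
  obtain ⟨⟨hht, _⟩, hut⟩ := hδ t htb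
  have htnorm : ‖t‖ < δ := by simpa [dist_eq_norm] using htb
  have htpos : 0 < ‖t‖ := norm_pos_iff.mpr htne
  -- mean value estimate on closedBall 0 ‖t‖
  have hmvt : ‖g t - g 0‖ ≤ ε' * C * ‖t‖ ^ k * ‖t - 0‖ := by
    apply Convex.norm_image_sub_le_of_norm_deriv_le
      (fun z _ => hdg z) _ (convex_closedBall (0 : ℂ) ‖t‖)
      (mem_closedBall_self (norm_nonneg t))
      (by simpa [mem_closedBall, dist_eq_norm] using le_refl ‖t‖)
    intro z hz
    have hzle : ‖z‖ ≤ ‖t‖ := by simpa [mem_closedBall, dist_eq_norm] using hz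
    have hzball : z ∈ ball (0 : ℂ) δ := by
      simp only [mem_ball, dist_eq_norm, sub_zero]
      exact lt_of_le_of_lt hzle htnorm
    obtain ⟨⟨_, hz2⟩, _⟩ := hδ z hzball
    calc ‖deriv g z‖ ≤ ε' * C * ‖z‖ ^ k := hz2
      _ ≤ ε' * C * ‖t‖ ^ k := by
          apply mul_le_mul_of_nonneg_left (pow_le_pow_left₀ (norm_nonneg z) hzle k)
          positivity
  rw [hg0, sub_zero, sub_zero] at hmvt
  have hgt : ‖g t‖ ≤ ε' * C * ‖t‖ ^ (k + 1) := by
    calc ‖g t‖ ≤ ε' * C * ‖t‖ ^ k * ‖t‖ := hmvt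
      _ = ε' * C * ‖t‖ ^ (k + 1) := by rw [pow_succ]; ring
  have hht_norm : ‖t‖ ^ (k + 1) * (‖u 0‖ / 2) ≤ ‖h t‖ := by
    rw [hht, norm_mul, norm_pow]
    exact mul_le_mul_of_nonneg_left hut (by positivity)
  have hhtpos : 0 < ‖t‖ ^ (k + 1) * (‖u 0‖ / 2) := by positivity
  rw [norm_div]
  have hbound : ‖g t‖ / ‖h t‖ ≤ (ε' * C * ‖t‖ ^ (k + 1)) / (‖t‖ ^ (k + 1) * (‖u 0‖ / 2)) :=
    div_le_div₀ (by positivity) hgt hhtpos hht_norm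
  have hcompute : (ε' * C * ‖t‖ ^ (k + 1)) / (‖t‖ ^ (k + 1) * (‖u 0‖ / 2)) = ε / 4 := by
    have hC0 : (8 : ℝ) * C ≠ 0 := by positivity
    rw [hε'_def, div_eq_div_iff hhtpos.ne' (by norm_num : (4 : ℝ) ≠ 0),
      div_mul_eq_mul_div, div_mul_eq_mul_div, div_mul_eq_mul_div, div_eq_iff hC0]
    ring
  rw [hcompute] at hbound
  calc ‖g t‖ / ‖h t‖ ≤ ε / 4 := hbound
    _ < ε := by linarith
end

section
/- Define h_θ on the image of G(s,t) = (s², s⁵ + ts, t) by h_θ(G(s,t)) = G(e^{iθ/4} s, e^{iθ} t). Then h_θ is well defined: if G(s,t) = G(s',t') then G(e^{iθ/4}s, e^{iθ}t) = G(e^{iθ/4}s', e^{iθ}t'). Moreover, for every s ∈ ℂ, t ∈ ℂ, θ ∈ ℝ: |e^{iθ/4}s|^{10} + |e^{iθ/4}s|²·|(e^{iθ/4}s)⁴ + e^{iθ}t|² = |s|^{10} + |s|²·|s⁴ + t|², so h_θ preserves the set {G(s,t) : |s|^{10} + |s|²|s⁴+t|² ≤ 1}. -/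
open Complex

noncomputable def Gmap (s t : ℂ) : (ℂ × ℂ) × ℂ := ((s ^ 2, s ^ 5 + t * s), t)

lemma abs_exp_aux (θ : ℝ) : ‖Complex.exp (θ * I / 4)‖ = 1 ∧
    ‖Complex.exp (θ * I)‖ = 1 := by
  constructor <;> rw [Complex.norm_exp] <;> simp [Complex.div_re, Complex.mul_re]

lemma pow4_aux (θ : ℝ) : Complex.exp (θ * I / 4) ^ 4 = Complex.exp (θ * I) := by
  rw [← Complex.exp_nat_mul]; ring_nf

/-- The weighted rotation `(s,t) ↦ (e^{iθ/4} s, e^{iθ} t)` descends to the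
image of the unfolding `G(s,t) = (s², s⁵ + ts, t)` (well-definedness of `h_θ`) and preserves
the non-Euclidean ball `|s|¹⁰ + |s|²·|s⁴ + t|² ≤ 1`. -/
theorem htheta_well_defined_and_isometric (θ : ℝ) :
    (∀ s t s' t' : ℂ, Gmap s t = Gmap s' t' →
      Gmap (Complex.exp (θ * I / 4) * s) (Complex.exp (θ * I) * t)
        = Gmap (Complex.exp (θ * I / 4) * s') (Complex.exp (θ * I) * t')) ∧
    (∀ s t : ℂ,
      ‖Complex.exp (θ * I / 4) * s‖ ^ 10
        + ‖Complex.exp (θ * I / 4) * s‖ ^ 2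
          * ‖(Complex.exp (θ * I / 4) * s) ^ 4 + Complex.exp (θ * I) * t‖ ^ 2
      = ‖s‖ ^ 10 + ‖s‖ ^ 2 * ‖s ^ 4 + t‖ ^ 2) ∧
    (∀ p ∈ {q : (ℂ × ℂ) × ℂ | ∃ s t : ℂ, q = Gmap s t ∧
        ‖s‖ ^ 10 + ‖s‖ ^ 2 * ‖s ^ 4 + t‖ ^ 2 ≤ 1},
      ∃ s t : ℂ,
        ((fun q : (ℂ × ℂ) × ℂ => q) p = Gmap s t) ∧
        Gmap (Complex.exp (θ * I / 4) * s) (Complex.exp (θ * I) * t) ∈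
          {q : (ℂ × ℂ) × ℂ | ∃ s' t' : ℂ, q = Gmap s' t' ∧
            ‖s'‖ ^ 10 + ‖s'‖ ^ 2 * ‖s' ^ 4 + t'‖ ^ 2 ≤ 1}) := by
  obtain ⟨h1, h2⟩ := abs_exp_aux θ
  have hp4 := pow4_aux θ
  have isom : ∀ s t : ℂ,
      ‖Complex.exp (θ * I / 4) * s‖ ^ 10
        + ‖Complex.exp (θ * I / 4) * s‖ ^ 2
          * ‖(Complex.exp (θ * I / 4) * s) ^ 4 + Complex.exp (θ * I) * t‖ ^ 2
      = ‖s‖ ^ 10 + ‖s‖ ^ 2 * ‖s ^ 4 + t‖ ^ 2 := by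
    intro s t
    have key : (Complex.exp (θ * I / 4) * s) ^ 4 + Complex.exp (θ * I) * t
        = Complex.exp (θ * I) * (s ^ 4 + t) := by
      rw [mul_pow, hp4]; ring
    rw [key, norm_mul, norm_mul, h1, h2, one_mul, one_mul]
  refine ⟨?_, isom, ?_⟩
  · intro s t s' t' h
    simp only [Gmap, Prod.mk.injEq] at h ⊢
    obtain ⟨⟨ha, hb⟩, hc⟩ := h
    refine ⟨⟨?_, ?_⟩, by rw [hc]⟩
    · rw [mul_pow, mul_pow, ha]
    · have key : ∀ u v : ℂ, (Complex.exp (θ * I / 4) * u) ^ 5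
          + Complex.exp (θ * I) * v * (Complex.exp (θ * I / 4) * u)
          = Complex.exp (θ * I / 4) ^ 5 * (u ^ 5 + v * u) := by
        intro u v; rw [← hp4]; ring
      rw [key, key, hb]
  · rintro p ⟨s, t, rfl, hle⟩
    exact ⟨s, t, rfl, _, _, rfl, by rw [isom]; exact hle⟩
end
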